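/- Let A and B be contractions on complex Hilbert spaces H_A and H_B with A ≈ B (there exist linear isometries Ω : H_A → H_B and Ω' : H_B → H_A with Ω∘A = B∘Ω and Ω'∘B = A∘Ω'). Let Y_A ⊆ H_A be a closed subspace reducing A such that A|Y_A is unitary and such that Y_A contains every closed subspace of H_A that reduces A and on which A restricts to a unitary operator (i.e., Y_A is the maximal unitary reducing subspace of A); let Y_B ⊆ H_B be the analogous subspace for B. Then the unitary parts A|Y_A and B|Y_B are unitarily equivalent. -/

import Mathlib

open ContinuousLinearMap
open scoped ComplexInnerProductSpace

private lemma key_adj {H : Type*} [NormedAddCommGroup H]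
    [InnerProductSpace ℂ H] [CompleteSpace H] (B : H →L[ℂ] H) (hB : ‖B‖ ≤ 1)
    {n : H} (hn : ‖B n‖ = ‖n‖) : adjoint B (B n) = n := by
  have hadn : ‖adjoint B‖ = ‖B‖ := LinearIsometryEquiv.norm_map _ B
  have h1 : ‖adjoint B (B n)‖ ≤ ‖n‖ := by
    calc ‖adjoint B (B n)‖ ≤ ‖adjoint B‖ * ‖B n‖ := le_opNorm _ _
    _ ≤ 1 * ‖n‖ := by rw [hn]; exact mul_le_mul_of_nonneg_right (hadn ▸ hB) (norm_nonneg n)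
    _ = ‖n‖ := one_mul _
  have h2 : RCLike.re (⟪adjoint B (B n), n⟫) = ‖n‖ ^ 2 := by
    rw [adjoint_inner_left]
    rw [inner_self_eq_norm_sq, hn]
  have h3 := norm_sub_sq (𝕜 := ℂ) (adjoint B (B n)) n
  have h4 : ‖adjoint B (B n) - n‖ ^ 2 ≤ 0 := by
    rw [h3, h2]; nlinarith [norm_nonneg (adjoint B (B n)), norm_nonneg n]
  have h5 : ‖adjoint B (B n) - n‖ = 0 := by
    nlinarith [norm_nonneg (adjoint B (B n) - n)]
  exact sub_eq_zero.mp (norm_eq_zero.mp h5)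

private lemma maps_into {HA HB : Type*}
    [NormedAddCommGroup HA] [InnerProductSpace ℂ HA] [CompleteSpace HA]
    [NormedAddCommGroup HB] [InnerProductSpace ℂ HB] [CompleteSpace HB]
    (A : HA →L[ℂ] HA) (B : HB →L[ℂ] HB) (hB : ‖B‖ ≤ 1)
    (Ω : HA →ₗᵢ[ℂ] HB) (hΩ : ∀ x, Ω (A x) = B (Ω x))
    (YA : Submodule ℂ HA) (hYAc : IsClosed (YA : Set HA))
    (hYAinv : ∀ y ∈ YA, A y ∈ YA)
    (hYAiso : ∀ y ∈ YA, ‖A y‖ = ‖y‖) (hYAsurj : ∀ y ∈ YA, ∃ z ∈ YA, A z = y)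
    (YB : Submodule ℂ HB)
    (hYBmax : ∀ Z : Submodule ℂ HB, IsClosed (Z : Set HB) →
      (∀ y ∈ Z, B y ∈ Z) → (∀ y ∈ Z, adjoint B y ∈ Z) →
      (∀ y ∈ Z, ‖B y‖ = ‖y‖) → (∀ y ∈ Z, ∃ z ∈ Z, B z = y) → Z ≤ YB) :
    ∀ y ∈ YA, Ω y ∈ YB := by
  set Z := YA.map Ω.toLinearMap with hZ
  have hZc : IsClosed (Z : Set HB) := by
    have : (Z : Set HB) = Ω '' (YA : Set HA) := by
      ext x; simp [hZ]
    rw [this]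
    exact (Ω.isometry.isClosedEmbedding).isClosedMap _ hYAc
  have c2 : ∀ z ∈ Z, B z ∈ Z := by
    rintro _ ⟨y, hy, rfl⟩
    exact ⟨A y, hYAinv y hy, hΩ y⟩
  have c4 : ∀ z ∈ Z, ‖B z‖ = ‖z‖ := by
    rintro _ ⟨y, hy, rfl⟩
    show ‖B (Ω y)‖ = ‖Ω y‖
    rw [← hΩ, Ω.norm_map, Ω.norm_map, hYAiso y hy]
  have c5 : ∀ z ∈ Z, ∃ w ∈ Z, B w = z := by
    rintro _ ⟨y, hy, rfl⟩
    obtain ⟨z, hz, hAz⟩ := hYAsurj y hy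
    exact ⟨Ω z, ⟨z, hz, rfl⟩, by show B (Ω z) = Ω y; rw [← hΩ, hAz]⟩
  have c3 : ∀ z ∈ Z, adjoint B z ∈ Z := by
    rintro _ ⟨y, hy, rfl⟩
    obtain ⟨z, hz, hAz⟩ := hYAsurj y hy
    have hy' : (Ω y : HB) = B (Ω z) := by rw [← hΩ, hAz]
    have hnorm : ‖B (Ω z)‖ = ‖Ω z‖ := by
      rw [← hΩ, Ω.norm_map, Ω.norm_map, hYAiso z hz]
    show adjoint B (Ω y) ∈ Z
    rw [hy', key_adj B hB hnorm]
    exact ⟨z, hz, rfl⟩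
  exact fun y hy => hYBmax Z hZc c2 c3 c4 c5 ⟨y, hy, rfl⟩

private lemma core {H K : Type*}
    [NormedAddCommGroup H] [InnerProductSpace ℂ H] [CompleteSpace H]
    [NormedAddCommGroup K] [InnerProductSpace ℂ K] [CompleteSpace K]
    (U : H ≃ₗᵢ[ℂ] H) (V : K ≃ₗᵢ[ℂ] K)
    (J : H →ₗᵢ[ℂ] K) (J' : K →ₗᵢ[ℂ] H)
    (hJ : ∀ x, J (U x) = V (J x)) (hJ' : ∀ y, J' (V y) = U (J' y)) :
    ∃ W : H ≃ₗᵢ[ℂ] K, ∀ x, W (U x) = V (W x) := by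
  classical
  set M : Submodule ℂ H := LinearMap.range J'.toLinearMap with hMdef
  have hMc : IsClosed (M : Set H) := by
    have h : (M : Set H) = Set.range J' := by
      ext x; simp [hMdef, LinearMap.mem_range]
    rw [h]
    exact (J'.isometry.isClosedEmbedding).isClosed_range
  haveI : CompleteSpace M := hMc.completeSpace_coe
  set N : Submodule ℂ H := Mᗮ with hNdef
  have hNM : Nᗮ = M := Submodule.orthogonal_orthogonal M
  haveI : CompleteSpace N := (Submodule.isClosed_orthogonal M).completeSpace_coe
  set T : H →ₗᵢ[ℂ] H := J'.comp J with hTdef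
  have hTM : ∀ x, T x ∈ M := fun x => ⟨J x, rfl⟩
  have hTU : ∀ x, T (U x) = U (T x) := fun x => by
    show J' (J (U x)) = U (J' (J x)); rw [hJ, hJ']
  have hUM : ∀ m ∈ M, U m ∈ M := by rintro _ ⟨k, rfl⟩; exact ⟨V k, (hJ' k)⟩
  have hU'M : ∀ m ∈ M, U.symm m ∈ M := by
    rintro _ ⟨k, rfl⟩
    refine ⟨V.symm k, ?_⟩
    show J' (V.symm k) = U.symm (J' k)
    apply U.injective
    rw [U.apply_symm_apply, ← hJ' (V.symm k), V.apply_symm_apply]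
  have hUN : ∀ n ∈ N, U n ∈ N := by
    intro n hn
    rw [hNdef, Submodule.mem_orthogonal] at hn ⊢
    intro m hm
    calc ⟪m, U n⟫ = ⟪U (U.symm m), U n⟫ := by rw [U.apply_symm_apply]
    _ = ⟪U.symm m, n⟫ := U.inner_map_map _ _
    _ = 0 := hn _ (hU'M m hm)
  have hU'N : ∀ n ∈ N, U.symm n ∈ N := by
    intro n hn
    rw [hNdef, Submodule.mem_orthogonal] at hn ⊢
    intro m hm
    calc ⟪m, U.symm n⟫ = ⟪U m, U (U.symm n)⟫ := (U.inner_map_map _ _).symm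
    _ = ⟪U m, n⟫ := by rw [U.apply_symm_apply]
    _ = 0 := hn _ (hUM m hm)
  set Tl : H →ₗ[ℂ] H := T.toLinearMap with hTldef
  have hTlapp : ∀ x, Tl x = T x := fun _ => rfl
  set F : Submodule ℂ H := ⨆ n : ℕ, N.map (Tl ^ n) with hFdef
  set E : Submodule ℂ H := F.topologicalClosure with hEdef
  have hEc : IsClosed (E : Set H) := F.isClosed_topologicalClosure
  haveI : CompleteSpace E := hEc.completeSpace_coe
  have hNF : N ≤ F := by
    have h := le_iSup (fun n : ℕ => N.map (Tl ^ n)) 0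
    simpa [Module.End.one_eq_id, Submodule.map_id] using h
  have hNE : N ≤ E := hNF.trans F.le_topologicalClosure
  -- closure of F under T, U, U.symm
  have hFT : ∀ x ∈ F, T x ∈ F := by
    intro x hx
    refine Submodule.iSup_induction (motive := fun y => T y ∈ F) _ hx (fun n y hy => ?_)
      (by show T 0 ∈ F; rw [map_zero]; exact F.zero_mem) ?_
    · obtain ⟨m, hm, rfl⟩ := hy
      exact le_iSup (fun n : ℕ => N.map (Tl ^ n)) (n + 1)
        ⟨m, hm, by rw [pow_succ']; rfl⟩
    · intro a b ha hb; rw [map_add]; exact F.add_mem ha hb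
  have hTnU : ∀ (n : ℕ) (x : H), (Tl ^ n) (U x) = U ((Tl ^ n) x) := by
    intro n
    induction n with
    | zero => intro x; simp
    | succ m ih =>
      intro x
      rw [pow_succ', Module.End.mul_apply, Module.End.mul_apply, ih, hTlapp, hTlapp, hTU]
  have hFU : ∀ x ∈ F, U x ∈ F := by
    intro x hx
    refine Submodule.iSup_induction (motive := fun y => U y ∈ F) _ hx (fun n y hy => ?_)
      (by show U 0 ∈ F; rw [map_zero]; exact F.zero_mem) ?_
    · obtain ⟨m, hm, rfl⟩ := hy
      rw [← hTnU]
      exact le_iSup (fun n : ℕ => N.map (Tl ^ n)) n ⟨U m, hUN m hm, rfl⟩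
    · intro a b ha hb; rw [map_add]; exact F.add_mem ha hb
  have hFU' : ∀ x ∈ F, U.symm x ∈ F := by
    intro x hx
    refine Submodule.iSup_induction (motive := fun y => U.symm y ∈ F) _ hx (fun n y hy => ?_)
      (by show U.symm 0 ∈ F; rw [map_zero]; exact F.zero_mem) ?_
    · obtain ⟨m, hm, rfl⟩ := hy
      have : (Tl ^ n) m = U ((Tl ^ n) (U.symm m)) := by
        rw [← hTnU, U.apply_symm_apply]
      rw [this, U.symm_apply_apply]
      exact le_iSup (fun n : ℕ => N.map (Tl ^ n)) n ⟨U.symm m, hU'N m hm, rfl⟩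
    · intro a b ha hb; rw [map_add]; exact F.add_mem ha hb
  have hclosE : ∀ (f : H → H), Continuous f → (∀ x ∈ F, f x ∈ E) → ∀ x ∈ E, f x ∈ E := by
    intro f hf hmem x hx
    have hss : (F : Set H) ⊆ f ⁻¹' (E : Set H) := fun y hy => hmem y hy
    have h2 : closure (F : Set H) ⊆ f ⁻¹' (E : Set H) :=
      closure_minimal hss (hEc.preimage hf)
    have hx' : x ∈ closure (F : Set H) := by
      rwa [← Submodule.topologicalClosure_coe (s := F)]
    exact h2 hx'
  have hET : ∀ x ∈ E, T x ∈ E :=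
    hclosE T T.continuous (fun x hx => F.le_topologicalClosure (hFT x hx))
  have hEU : ∀ x ∈ E, U x ∈ E :=
    hclosE U U.continuous (fun x hx => F.le_topologicalClosure (hFU x hx))
  have hEU' : ∀ x ∈ E, U.symm x ∈ E :=
    hclosE U.symm U.symm.continuous (fun x hx => F.le_topologicalClosure (hFU' x hx))
  have hUEperp : ∀ w ∈ Eᗮ, U w ∈ Eᗮ := by
    intro w hw
    rw [Submodule.mem_orthogonal] at hw ⊢
    intro e he
    calc ⟪e, U w⟫ = ⟪U (U.symm e), U w⟫ := by rw [U.apply_symm_apply]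
    _ = ⟪U.symm e, w⟫ := U.inner_map_map _ _
    _ = 0 := hw _ (hEU' e he)
  -- the key decomposition fact: E ∩ Nᗮ ⊆ T '' E
  set SM : Submodule ℂ H := E.map Tl with hSMdef
  have hSMc : IsClosed (SM : Set H) := by
    set TE : E →ₗᵢ[ℂ] H := T.comp E.subtypeₗᵢ with hTEdef
    have h : (SM : Set H) = Set.range TE := by
      ext x
      constructor
      · rintro ⟨e, he, rfl⟩; exact ⟨⟨e, he⟩, rfl⟩
      · rintro ⟨⟨e, he⟩, rfl⟩; exact ⟨e, he, rfl⟩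
    rw [h]
    exact (TE.isometry.isClosedEmbedding).isClosed_range
  have hFQ : ∀ x ∈ F, x - (N.orthogonalProjectionOnto x : H) ∈ SM := by
    intro x hx
    refine Submodule.iSup_induction (motive := fun y => y - (N.orthogonalProjectionOnto y : H) ∈ SM) _ hx
      (fun n y hy => ?_) (by simp) ?_
    · obtain ⟨m, hm, rfl⟩ := hy
      match n with
      | 0 =>
        have hmN : (Tl ^ 0) m ∈ N := by simpa using hm
        have : (N.orthogonalProjectionOnto ((Tl ^ 0) m) : H) = (Tl ^ 0) m :=
          (Submodule.starProjection_eq_self_iff (K := N)).mpr hmN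
        rw [this, sub_self]; exact SM.zero_mem
      | n + 1 =>
        have hmem : (Tl ^ n) m ∈ E := F.le_topologicalClosure
          (le_iSup (fun n : ℕ => N.map (Tl ^ n)) n ⟨m, hm, rfl⟩)
        have hy' : (Tl ^ (n+1)) m = T ((Tl ^ n) m) := by rw [pow_succ']; rfl
        have hyM : (Tl ^ (n+1)) m ∈ Nᗮ := by rw [hNM, hy']; exact hTM _
        have : (N.orthogonalProjectionOnto ((Tl ^ (n+1)) m) : H) = 0 := by
          rw [Submodule.orthogonalProjectionOnto_apply_of_mem_orthogonal hyM]
          rfl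
        rw [this, sub_zero, hy']
        exact ⟨(Tl ^ n) m, hmem, rfl⟩
    · intro a b ha hb
      have : a + b - (N.orthogonalProjectionOnto (a + b) : H)
          = (a - N.orthogonalProjectionOnto a) + (b - N.orthogonalProjectionOnto b) := by
        rw [map_add]; push_cast; abel
      rw [this]; exact SM.add_mem ha hb
  have hEQ : ∀ x ∈ E, x - (N.orthogonalProjectionOnto x : H) ∈ SM := by
    intro x hx
    have hcont : Continuous fun x : H => x - (N.orthogonalProjectionOnto x : H) :=
      continuous_id.sub (N.subtypeL.comp (N.orthogonalProjectionOnto)).continuous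
    have hss : (F : Set H) ⊆ (fun x : H => x - (N.orthogonalProjectionOnto x : H)) ⁻¹' (SM : Set H) :=
      fun y hy => hFQ y hy
    have h2 := closure_minimal hss (hSMc.preimage hcont)
    have hx' : x ∈ closure (F : Set H) := by
      rwa [← Submodule.topologicalClosure_coe (s := F)]
    exact h2 hx'
  have hQ : ∀ x ∈ E, x ∈ Nᗮ → ∃ e ∈ E, T e = x := by
    intro x hxE hxN
    have h0 : (N.orthogonalProjectionOnto x : H) = 0 := by
      rw [Submodule.orthogonalProjectionOnto_apply_of_mem_orthogonal hxN]; rfl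
    have := hEQ x hxE
    rw [h0, sub_zero] at this
    obtain ⟨e, he, hee⟩ := this
    exact ⟨e, he, hee⟩
  -- the map G
  set Pc : H →L[ℂ] H := E.subtypeL.comp (E.orthogonalProjectionOnto) with hPcdef
  have hPcA : ∀ x, Pc x = (E.orthogonalProjectionOnto x : H) := fun _ => rfl
  have hPcE : ∀ x, Pc x ∈ E := fun x => (E.orthogonalProjectionOnto x).2
  have hPcself : ∀ x ∈ E, Pc x = x := fun x hx => (Submodule.starProjection_eq_self_iff (K := E)).mpr hx
  have hPcperp : ∀ x ∈ Eᗮ, Pc x = 0 := by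
    intro x hx
    rw [hPcA, Submodule.orthogonalProjectionOnto_apply_of_mem_orthogonal hx]; rfl
  have hsubperp : ∀ x, x - Pc x ∈ Eᗮ := fun x => Submodule.sub_starProjection_mem_orthogonal (K := E) x
  set G : H → H := fun x => T (Pc x) + (x - Pc x) with hGdef
  have hGadd : ∀ a b, G (a + b) = G a + G b := by
    intro a b
    show T (Pc (a + b)) + ((a + b) - Pc (a + b)) = (T (Pc a) + (a - Pc a)) + (T (Pc b) + (b - Pc b))
    rw [map_add Pc, map_add T]
    abel
  have hGsmul : ∀ (c : ℂ) a, G (c • a) = c • G a := by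
    intro c a
    show T (Pc (c • a)) + ((c • a) - Pc (c • a)) = c • (T (Pc a) + (a - Pc a))
    rw [map_smul Pc, map_smul T, smul_add, smul_sub]
  have hEperpN : Eᗮ ≤ Nᗮ := Submodule.orthogonal_le hNE
  have hGM : ∀ x, G x ∈ M := by
    intro x
    refine M.add_mem (hTM _) ?_
    rw [← hNM]
    exact hEperpN (hsubperp x)
  have hGnorm : ∀ x, ‖G x‖ = ‖x‖ := by
    intro x
    have ho1 : ⟪T (Pc x), x - Pc x⟫ = 0 := by
      have := hsubperp x
      rw [Submodule.mem_orthogonal] at this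
      exact this _ (hET _ (hPcE x))
    have ho2 : ⟪Pc x, x - Pc x⟫ = 0 := by
      have := hsubperp x
      rw [Submodule.mem_orthogonal] at this
      exact this _ (hPcE x)
    have e1 : ‖G x‖ ^ 2 = ‖T (Pc x)‖ ^ 2 + ‖x - Pc x‖ ^ 2 := by
      rw [hGdef]
      have := norm_add_sq (𝕜 := ℂ) (T (Pc x)) (x - Pc x)
      rw [ho1] at this; simpa using this
    have e2 : ‖x‖ ^ 2 = ‖Pc x‖ ^ 2 + ‖x - Pc x‖ ^ 2 := by
      have hx : x = Pc x + (x - Pc x) := by abel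
      nth_rewrite 1 [hx]
      have := norm_add_sq (𝕜 := ℂ) (Pc x) (x - Pc x)
      rw [ho2] at this; simpa using this
    have e3 : ‖G x‖ ^ 2 = ‖x‖ ^ 2 := by rw [e1, e2, T.norm_map]
    nlinarith [norm_nonneg (G x), norm_nonneg x]
  have hGsurj : ∀ m ∈ M, ∃ x, G x = m := by
    intro m hm
    have hmN : m ∈ Nᗮ := by rw [hNM]; exact hm
    have h1 : m - Pc m ∈ Eᗮ := hsubperp m
    have h2 : Pc m ∈ Nᗮ := by
      have : Pc m = m - (m - Pc m) := by abel
      rw [this]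
      exact Nᗮ.sub_mem hmN (hEperpN h1)
    obtain ⟨e, he, hTe⟩ := hQ (Pc m) (hPcE m) h2
    refine ⟨e + (m - Pc m), ?_⟩
    have hPe : Pc (e + (m - Pc m)) = e := by
      rw [map_add, hPcself e he, hPcperp _ h1, add_zero]
    show T (Pc (e + (m - Pc m))) + (e + (m - Pc m) - Pc (e + (m - Pc m))) = m
    rw [hPe, hTe]; abel
  have hPcU : ∀ x, Pc (U x) = U (Pc x) := by
    intro x
    rw [hPcA]
    refine Submodule.eq_starProjection_of_mem_orthogonal (K := E) (hEU _ (hPcE x)) ?_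
    have : U x - U (Pc x) = U (x - Pc x) := by rw [map_sub]
    rw [this]
    exact hUEperp _ (hsubperp x)
  have hGU : ∀ x, G (U x) = U (G x) := by
    intro x
    show T (Pc (U x)) + (U x - Pc (U x)) = U (T (Pc x) + (x - Pc x))
    rw [hPcU, hTU, map_add, map_sub]
  -- build W
  have hW0 : ∀ x, ∃ k, J' k = G x := fun x => hGM x
  choose w hw using hW0
  have hwadd : ∀ a b, w (a + b) = w a + w b := by
    intro a b
    apply J'.injective
    rw [hw, map_add, hw, hw, hGadd]
  have hwsmul : ∀ (c : ℂ) a, w (c • a) = c • w a := by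
    intro c a
    apply J'.injective
    rw [hw, map_smul, hw, hGsmul]
  set Wl : H →ₗᵢ[ℂ] K :=
    { toFun := w
      map_add' := hwadd
      map_smul' := hwsmul
      norm_map' := fun x => by
        show ‖w x‖ = ‖x‖
        rw [← J'.norm_map (w x), hw, hGnorm] } with hWldef
  have hWlsurj : Function.Surjective Wl := by
    intro k
    obtain ⟨x, hx⟩ := hGsurj (J' k) ⟨k, rfl⟩
    refine ⟨x, ?_⟩
    apply J'.injective
    show J' (w x) = J' k
    rw [hw, hx]
  refine ⟨LinearIsometryEquiv.ofSurjective Wl hWlsurj, fun x => ?_⟩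
  rw [LinearIsometryEquiv.coe_ofSurjective]
  show w (U x) = V (w x)
  apply J'.injective
  rw [hw, hJ', hw, hGU]


/-- If `A ≈ B` are contractions and `Y_A`, `Y_B` denote their maximal unitary reducing subspaces
(so `A|Y_A`, `B|Y_B` are the unitary parts of `A` and `B`), then the unitary parts `A|Y_A` and
`B|Y_B` are unitarily equivalent. -/
theorem stmt_14
    {HA HB : Type*}
    [NormedAddCommGroup HA] [InnerProductSpace ℂ HA] [CompleteSpace HA]
    [NormedAddCommGroup HB] [InnerProductSpace ℂ HB] [CompleteSpace HB]
    (A : HA →L[ℂ] HA) (B : HB →L[ℂ] HB)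
    (hA : ‖A‖ ≤ 1) (hB : ‖B‖ ≤ 1)
    -- `A ≈ B`
    (Ω : HA →ₗᵢ[ℂ] HB) (Ω' : HB →ₗᵢ[ℂ] HA)
    (hΩ : ∀ x, Ω (A x) = B (Ω x))
    (hΩ' : ∀ y, Ω' (B y) = A (Ω' y))
    -- `Y_A` is a closed subspace reducing `A` on which `A` restricts to a unitary operator
    (YA : Submodule ℂ HA) (hYAc : IsClosed (YA : Set HA))
    (hYAinv : ∀ y ∈ YA, A y ∈ YA) (hYAinv' : ∀ y ∈ YA, adjoint A y ∈ YA)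
    (hYAiso : ∀ y ∈ YA, ‖A y‖ = ‖y‖) (hYAsurj : ∀ y ∈ YA, ∃ z ∈ YA, A z = y)
    -- and `Y_A` is maximal among such subspaces
    (hYAmax : ∀ Z : Submodule ℂ HA, IsClosed (Z : Set HA) →
      (∀ y ∈ Z, A y ∈ Z) → (∀ y ∈ Z, adjoint A y ∈ Z) →
      (∀ y ∈ Z, ‖A y‖ = ‖y‖) → (∀ y ∈ Z, ∃ z ∈ Z, A z = y) → Z ≤ YA)
    -- `Y_B` is the analogous subspace for `B`
    (YB : Submodule ℂ HB) (hYBc : IsClosed (YB : Set HB))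
    (hYBinv : ∀ y ∈ YB, B y ∈ YB) (hYBinv' : ∀ y ∈ YB, adjoint B y ∈ YB)
    (hYBiso : ∀ y ∈ YB, ‖B y‖ = ‖y‖) (hYBsurj : ∀ y ∈ YB, ∃ z ∈ YB, B z = y)
    (hYBmax : ∀ Z : Submodule ℂ HB, IsClosed (Z : Set HB) →
      (∀ y ∈ Z, B y ∈ Z) → (∀ y ∈ Z, adjoint B y ∈ Z) →
      (∀ y ∈ Z, ‖B y‖ = ‖y‖) → (∀ y ∈ Z, ∃ z ∈ Z, B z = y) → Z ≤ YB) :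
    -- then the unitary parts `A|Y_A` and `B|Y_B` are unitarily equivalent
    ∃ W : YA ≃ₗᵢ[ℂ] YB, ∀ y : YA, (W ⟨A y, hYAinv y y.2⟩ : HB) = B (W y) := by
  haveI : CompleteSpace YA := hYAc.completeSpace_coe
  haveI : CompleteSpace YB := hYBc.completeSpace_coe
  have hΩmem : ∀ y ∈ YA, Ω y ∈ YB :=
    maps_into A B hB Ω hΩ YA hYAc hYAinv hYAiso hYAsurj YB hYBmax
  have hΩ'mem : ∀ y ∈ YB, Ω' y ∈ YA :=
    maps_into B A hA Ω' hΩ' YB hYBc hYBinv hYBiso hYBsurj YA hYAmax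
  set uL : YA →ₗᵢ[ℂ] YA :=
    { toFun := fun y => ⟨A y, hYAinv y y.2⟩
      map_add' := fun a b => Subtype.ext (by simp)
      map_smul' := fun c a => Subtype.ext (by simp)
      norm_map' := fun y => hYAiso y y.2 } with huL
  have huLsurj : Function.Surjective uL := by
    intro z
    obtain ⟨w, hw, hAw⟩ := hYAsurj z z.2
    exact ⟨⟨w, hw⟩, Subtype.ext hAw⟩
  set vL : YB →ₗᵢ[ℂ] YB :=
    { toFun := fun y => ⟨B y, hYBinv y y.2⟩
      map_add' := fun a b => Subtype.ext (by simp)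
      map_smul' := fun c a => Subtype.ext (by simp)
      norm_map' := fun y => hYBiso y y.2 } with hvL
  have hvLsurj : Function.Surjective vL := by
    intro z
    obtain ⟨w, hw, hBw⟩ := hYBsurj z z.2
    exact ⟨⟨w, hw⟩, Subtype.ext hBw⟩
  set U : YA ≃ₗᵢ[ℂ] YA := LinearIsometryEquiv.ofSurjective uL huLsurj with hU
  set V : YB ≃ₗᵢ[ℂ] YB := LinearIsometryEquiv.ofSurjective vL hvLsurj with hV
  have hUapp : ∀ y : YA, (U y : HA) = A y := fun y => by
    rw [hU, LinearIsometryEquiv.coe_ofSurjective]; rfl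
  have hVapp : ∀ y : YB, (V y : HB) = B y := fun y => by
    rw [hV, LinearIsometryEquiv.coe_ofSurjective]; rfl
  set Jl : YA →ₗᵢ[ℂ] YB :=
    { toFun := fun y => ⟨Ω y, hΩmem y y.2⟩
      map_add' := fun a b => Subtype.ext (by simp)
      map_smul' := fun c a => Subtype.ext (by simp)
      norm_map' := fun y => Ω.norm_map y } with hJl
  set Jl' : YB →ₗᵢ[ℂ] YA :=
    { toFun := fun y => ⟨Ω' y, hΩ'mem y y.2⟩
      map_add' := fun a b => Subtype.ext (by simp)
      map_smul' := fun c a => Subtype.ext (by simp)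
      norm_map' := fun y => Ω'.norm_map y } with hJl'
  have hJ : ∀ x, Jl (U x) = V (Jl x) := by
    intro x
    apply Subtype.ext
    show Ω (U x : HA) = (V (Jl x) : HB)
    rw [hUapp, hVapp]
    show Ω (A x) = B (Ω x)
    exact hΩ x
  have hJ' : ∀ y, Jl' (V y) = U (Jl' y) := by
    intro y
    apply Subtype.ext
    show Ω' (V y : HB) = (U (Jl' y) : HA)
    rw [hVapp, hUapp]
    show Ω' (B y) = A (Ω' y)
    exact hΩ' y
  obtain ⟨W, hW⟩ := core U V Jl Jl' hJ hJ'
  refine ⟨W, fun y => ?_⟩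
  have h1 : U y = ⟨A y, hYAinv y y.2⟩ := Subtype.ext (hUapp y)
  rw [← h1, hW y, hVapp]
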